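/- arXiv:2601.10249 — 2 statements merged into one kernel-verified Lean document; each statement's English description precedes it below -/
import Mathlib

section
/- Asymptotic behavior of λ and u (Claim 'Asymptotic behavior of frequently used functions', parts (a), (b), (e), (g), together with λ'(t) ~ 1/t): As t → ∞: λ(t)/log t → 1, e^{λ(t)}/(t·log t) → 1, t·λ'(t) → 1, −u(t)·(log t)/t → 1, and −u'(t)·log t → 1. -/
open Real MeasureTheory Filter

noncomputable section

/-- Tail sums: `s_k = Σ_{d=k}^Δ r_d` (also used as `q_k` for distributions `p`). -/
def tailS (Δ : ℕ) (r : ℕ → ℝ) (k : ℕ) : ℝ := ∑ d ∈ Finset.Icc k Δ, r d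

/-- Membership in the set `R_Δ`: `r_2 = -1`, `r_k ≥ 0` for `3 ≤ k ≤ Δ`, `r_k = 0` for `k > Δ`,
and `Σ_{k=3}^Δ r_k = 1`. -/
def memR (Δ : ℕ) (r : ℕ → ℝ) : Prop :=
  r 2 = -1 ∧ (∀ k, 3 ≤ k → k ≤ Δ → 0 ≤ r k) ∧ (∀ k, Δ < k → r k = 0) ∧
    (∑ k ∈ Finset.Icc 3 Δ, r k) = 1

/-- The Molloy–Reed constant `Υ_r = Σ_{k=3}^Δ k(k-2) r_k`. -/
def Upsilon (Δ : ℕ) (r : ℕ → ℝ) : ℝ := ∑ k ∈ Finset.Icc 3 Δ, (k : ℝ) * ((k : ℝ) - 2) * r k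

/-- `Λ_r(t) = λ'(t) · ∫_0^{λ(t)} e^x/(1+x)² · (Σ_{k=2}^{Δ-1} x^k/k! · s_{k+1}) dx`. -/
def LamErr (lam : ℝ → ℝ) (Δ : ℕ) (r : ℕ → ℝ) (t : ℝ) : ℝ :=
  deriv lam t * ∫ x in (0:ℝ)..(lam t),
    Real.exp x / (1 + x) ^ 2 *
      ∑ k ∈ Finset.Icc 2 (Δ - 1), x ^ k / (Nat.factorial k : ℝ) * tailS Δ r (k + 1)

/-- `H_r(t) = e^{-λ(t)} (Λ_r'(t) - λ'(t)Λ_r(t) + λ'(t) Σ_{k=0}^{Δ-2} λ(t)^k/k! · r_{k+2})`. -/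
def Herr (lam : ℝ → ℝ) (Δ : ℕ) (r : ℕ → ℝ) (t : ℝ) : ℝ :=
  Real.exp (-lam t) *
    (deriv (LamErr lam Δ r) t - deriv lam t * LamErr lam Δ r t +
      deriv lam t * ∑ k ∈ Finset.range (Δ - 1), lam t ^ k / (Nat.factorial k : ℝ) * r (k + 2))

/-- `I_r(t) = e^{-λ(t)} ( -Λ_r(t) + Σ_{k=1}^{Δ-2} λ(t)^k/k! · s_{k+2})`. -/
def Ierr (lam : ℝ → ℝ) (Δ : ℕ) (r : ℕ → ℝ) (t : ℝ) : ℝ :=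
  Real.exp (-lam t) *
    (-LamErr lam Δ r t +
      ∑ k ∈ Finset.Icc 1 (Δ - 2), lam t ^ k / (Nat.factorial k : ℝ) * tailS Δ r (k + 2))

/-- `u(t) = 1 + λ(t) ∫_0^t (λ'(s)-1)/λ(s)² ds`. -/
def uAux (lam : ℝ → ℝ) (t : ℝ) : ℝ :=
  1 + lam t * ∫ s in (0:ℝ)..t, (deriv lam s - 1) / (lam s) ^ 2

/-- `α_r(t) = -∫_0^t u(s) H_r(s) λ(s) ds`. -/
def alphaAux (lam : ℝ → ℝ) (Δ : ℕ) (r : ℕ → ℝ) (t : ℝ) : ℝ :=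
  -∫ s in (0:ℝ)..t, uAux lam s * Herr lam Δ r s * lam s

/-- `β_r(t) = ∫_0^t H_r(s) λ(s)² ds`. -/
def betaAux (lam : ℝ → ℝ) (Δ : ℕ) (r : ℕ → ℝ) (t : ℝ) : ℝ :=
  ∫ s in (0:ℝ)..t, Herr lam Δ r s * (lam s) ^ 2

/-- `ω_r(t) = α_r(t) λ(t) + β_r(t) u(t)`. -/
def omegaAux (lam : ℝ → ℝ) (Δ : ℕ) (r : ℕ → ℝ) (t : ℝ) : ℝ :=
  alphaAux lam Δ r t * lam t + betaAux lam Δ r t * uAux lam t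

/-- `t^-_{p,δ} = (1-δ)/(ε Υ_r)`. -/
def tMinus (Δ : ℕ) (r : ℕ → ℝ) (ε δ : ℝ) : ℝ := (1 - δ) / (ε * Upsilon Δ r)

/-- `t^+_{p,δ} = (1+δ)/(ε Υ_r)`. -/
def tPlus (Δ : ℕ) (r : ℕ → ℝ) (ε δ : ℝ) : ℝ := (1 + δ) / (ε * Upsilon Δ r)

/-- `w^-_{p,δ}`. -/
def wMinus (lam : ℝ → ℝ) (Δ : ℕ) (r : ℕ → ℝ) (ε δ : ℝ) (t : ℝ) : ℝ :=
  if t ≤ tMinus Δ r ε δ then lam t + (1 + δ / 2) * ε * omegaAux lam Δ r t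
  else lam (tMinus Δ r ε δ) + (1 + δ / 2) * ε * omegaAux lam Δ r (tMinus Δ r ε δ)

/-- `w^+_{p,δ}`. -/
def wPlus (lam : ℝ → ℝ) (Δ : ℕ) (r : ℕ → ℝ) (ε δ : ℝ) (t : ℝ) : ℝ :=
  if t ≤ tPlus Δ r ε δ then lam t + (1 - δ / 2) * ε * omegaAux lam Δ r t
  else lam (tPlus Δ r ε δ) + (1 - δ / 2) * ε * omegaAux lam Δ r (tPlus Δ r ε δ)

/-- `Ī^-_{p,δ}(t) = e^{-λ(t)} + (1-δ) ε I_r(t)`. -/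
def IbarMinus (lam : ℝ → ℝ) (Δ : ℕ) (r : ℕ → ℝ) (ε δ : ℝ) (t : ℝ) : ℝ :=
  Real.exp (-lam t) + (1 - δ) * ε * Ierr lam Δ r t

/-- `Ī^+_{p,δ}(t) = e^{-λ(t)} + (1+δ) ε I_r(t)`. -/
def IbarPlus (lam : ℝ → ℝ) (Δ : ℕ) (r : ℕ → ℝ) (ε δ : ℝ) (t : ℝ) : ℝ :=
  Real.exp (-lam t) + (1 + δ) * ε * Ierr lam Δ r t

/-- `Ĩ_p(x) = e^{-x} (1 + ε Σ_{k=1}^{Δ-2} x^k/k! · s_{k+2})`. -/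
def Itilde (Δ : ℕ) (r : ℕ → ℝ) (ε : ℝ) (x : ℝ) : ℝ :=
  Real.exp (-x) *
    (1 + ε * ∑ k ∈ Finset.Icc 1 (Δ - 2), x ^ k / (Nat.factorial k : ℝ) * tailS Δ r (k + 2))


/-! ### Auxiliary development for `asymptotics_lambda_u` -/


section Asym
variable {lam : ℝ → ℝ}

lemma lam_nonneg (hdiff : Differentiable ℝ lam) (h0 : lam 0 = 0)
    (hode : ∀ t : ℝ, 0 ≤ t → deriv lam t = Real.exp (-lam t) * (1 + lam t)) :
    ∀ t, 0 ≤ t → 0 ≤ lam t := by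
  by_contra h
  push_neg at h
  obtain ⟨t0, ht0, hneg⟩ := h
  have ht0' : 0 < t0 := by
    rcases ht0.lt_or_eq with h | h
    · exact h
    · rw [← h, h0] at hneg; linarith
  set S := Set.Icc 0 t0 ∩ lam ⁻¹' Set.Ici 0 with hSdef
  have hScomp : IsCompact S :=
    isCompact_Icc.inter_right (isClosed_Ici.preimage hdiff.continuous)
  have hSne : S.Nonempty := ⟨0, ⟨le_refl 0, ht0⟩, by simp [h0]⟩
  set c := sSup S with hc
  have hcS : c ∈ S := hScomp.sSup_mem hSne
  have hc0 : 0 ≤ c := hcS.1.1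
  have hclam : 0 ≤ lam c := hcS.2
  have hct0 : c < t0 := by
    rcases hcS.1.2.lt_or_eq with h | h
    · exact h
    · rw [h] at hclam; linarith
  have hIoc : ∀ t ∈ Set.Ioc c t0, lam t < 0 := by
    intro t ht
    by_contra hge
    push_neg at hge
    have : t ∈ S := ⟨⟨hc0.trans ht.1.le, ht.2⟩, hge⟩
    exact absurd (le_csSup hScomp.bddAbove this) (not_le.2 ht.1)
  have hev : ∀ᶠ t in nhds c, -1 < lam t :=
    (hdiff.continuous.continuousAt (x := c)).eventually (eventually_gt_nhds (by linarith))
  obtain ⟨δ, hδ, hball⟩ := Metric.eventually_nhds_iff.1 hev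
  set d := min (c + δ / 2) t0 with hd
  have hcd : c < d := lt_min (by linarith) hct0
  have hdt0 : d ≤ t0 := min_le_right _ _
  have hlamgt : ∀ t ∈ Set.Icc c d, -1 < lam t := by
    intro t ht
    apply hball
    have h1 : t - c < δ := by
      have : t ≤ c + δ / 2 := ht.2.trans (min_le_left _ _)
      linarith
    rw [Real.dist_eq, abs_lt]
    constructor <;> linarith [ht.1]
  have hmono : StrictMonoOn lam (Set.Icc c d) := by
    apply strictMonoOn_of_deriv_pos (convex_Icc c d) hdiff.continuous.continuousOn
    intro x hx
    rw [interior_Icc] at hx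
    rw [hode x (hc0.trans hx.1.le)]
    have := hlamgt x ⟨hx.1.le, hx.2.le⟩
    exact mul_pos (Real.exp_pos _) (by linarith)
  have : lam c < lam d := hmono (Set.left_mem_Icc.2 hcd.le) (Set.right_mem_Icc.2 hcd.le) hcd
  have := hIoc d ⟨hcd, hdt0⟩
  linarith

lemma lam_mono (hdiff : Differentiable ℝ lam) (h0 : lam 0 = 0)
    (hode : ∀ t : ℝ, 0 ≤ t → deriv lam t = Real.exp (-lam t) * (1 + lam t)) :
    StrictMonoOn lam (Set.Ici 0) := by
  apply strictMonoOn_of_deriv_pos (convex_Ici 0) hdiff.continuous.continuousOn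
  intro x hx
  rw [interior_Ici] at hx
  rw [hode x hx.le]
  have := lam_nonneg hdiff h0 hode x hx.le
  exact mul_pos (Real.exp_pos _) (by linarith)

lemma lam_pos (hdiff : Differentiable ℝ lam) (h0 : lam 0 = 0)
    (hode : ∀ t : ℝ, 0 ≤ t → deriv lam t = Real.exp (-lam t) * (1 + lam t)) :
    ∀ t, 0 < t → 0 < lam t := by
  intro t ht
  have := lam_mono hdiff h0 hode (Set.self_mem_Ici) (Set.mem_Ici.2 ht.le) ht
  rwa [h0] at this

end Asym


noncomputable def gInt (y : ℝ) : ℝ := ∫ x in (0:ℝ)..y, Real.exp x / (1 + x)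

lemma gInt_cont_on {y : ℝ} (hy : 0 ≤ y) :
    ContinuousOn (fun x => Real.exp x / (1 + x)) (Set.uIcc 0 y) := by
  apply ContinuousOn.div Real.continuous_exp.continuousOn (by fun_prop)
  intro x hx
  rw [Set.uIcc_of_le hy] at hx
  have := hx.1; positivity

lemma gInt_hasDerivAt {y : ℝ} (hy : 0 ≤ y) :
    HasDerivAt gInt (Real.exp y / (1 + y)) y := by
  apply intervalIntegral.integral_hasDerivAt_right ((gInt_cont_on hy).intervalIntegrable)
  · exact ((Real.measurable_exp.div (measurable_const.add measurable_id)).stronglyMeasurable).stronglyMeasurableAtFilter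
  · exact ContinuousAt.div Real.continuous_exp.continuousAt (by fun_prop) (by positivity)

section Asym
variable {lam : ℝ → ℝ}

lemma g_lam (hdiff : Differentiable ℝ lam) (h0 : lam 0 = 0)
    (hode : ∀ t : ℝ, 0 ≤ t → deriv lam t = Real.exp (-lam t) * (1 + lam t))
    (hpos : ∀ t, 0 ≤ t → 0 ≤ lam t) :
    ∀ t, 0 ≤ t → gInt (lam t) = t := by
  have key : ∀ s : ℝ, 0 ≤ s → HasDerivAt (fun x => gInt (lam x) - x) 0 s := by
    intro s hs
    have hg := gInt_hasDerivAt (hpos s hs)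
    have hl := (hdiff s).hasDerivAt
    have hcomp := HasDerivAt.comp s hg hl
    have h1 : (0:ℝ) < 1 + lam s := by have := hpos s hs; linarith
    have heq : Real.exp (lam s) / (1 + lam s) * deriv lam s = 1 := by
      rw [hode s hs]
      field_simp
      rw [← Real.exp_add]
      simp
    have := hcomp.sub (hasDerivAt_id s)
    rw [heq, sub_self] at this
    exact this
  intro t ht
  have := constant_of_has_deriv_right_zero (f := fun x => gInt (lam x) - x) (a := 0) (b := t)
    (fun x hx => ((key x hx.1).continuousAt).continuousWithinAt)
    (fun x hx => ((key x hx.1).hasDerivWithinAt)) t (Set.right_mem_Icc.2 ht)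
  simp only [h0] at this
  have hg0 : gInt 0 = 0 := intervalIntegral.integral_same
  rw [hg0] at this
  linarith

lemma gInt_mono : MonotoneOn gInt (Set.Ici 0) := by
  have : StrictMonoOn gInt (Set.Ici 0) := by
    apply strictMonoOn_of_deriv_pos (convex_Ici 0)
    · exact fun y hy => ((gInt_hasDerivAt hy).continuousAt).continuousWithinAt
    · intro x hx
      rw [interior_Ici] at hx
      rw [(gInt_hasDerivAt hx.le).deriv]
      have : (0:ℝ) < 1 + x := by linarith [(Set.mem_Ioi.1 hx).le]
      positivity
  exact this.monotoneOn

lemma lam_tendsto (hdiff : Differentiable ℝ lam) (h0 : lam 0 = 0)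
    (hode : ∀ t : ℝ, 0 ≤ t → deriv lam t = Real.exp (-lam t) * (1 + lam t))
    (hpos : ∀ t, 0 ≤ t → 0 ≤ lam t) :
    Filter.Tendsto lam Filter.atTop Filter.atTop := by
  rw [tendsto_atTop]
  intro b
  filter_upwards [eventually_ge_atTop (max 0 (gInt (max b 0) + 1))] with t ht
  have ht0 : 0 ≤ t := le_trans (le_max_left _ _) ht
  by_contra hlt
  push_neg at hlt
  have h1 : lam t ≤ max b 0 := le_trans hlt.le (le_max_left _ _)
  have h2 := gInt_mono (Set.mem_Ici.2 (hpos t ht0)) (Set.mem_Ici.2 (le_max_right b 0)) h1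
  rw [g_lam hdiff h0 hode hpos t ht0] at h2
  have := le_trans (le_max_right 0 (gInt (max b 0) + 1)) ht
  linarith

end Asym


noncomputable def EInt2 (y : ℝ) : ℝ := ∫ x in (0:ℝ)..y, Real.exp x / (1 + x) ^ 2

lemma cont2 {a b : ℝ} (ha : 0 ≤ a) (hb : 0 ≤ b) :
    ContinuousOn (fun x => Real.exp x / (1 + x) ^ 2) (Set.uIcc a b) := by
  apply ContinuousOn.div Real.continuous_exp.continuousOn (by fun_prop)
  intro x hx
  have : 0 ≤ x := le_trans (le_min ha hb) hx.1
  positivity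

lemma cont1 {a b : ℝ} (ha : 0 ≤ a) (hb : 0 ≤ b) :
    ContinuousOn (fun x => Real.exp x / (1 + x)) (Set.uIcc a b) := by
  apply ContinuousOn.div Real.continuous_exp.continuousOn (by fun_prop)
  intro x hx
  have : 0 ≤ x := le_trans (le_min ha hb) hx.1
  positivity

lemma gInt_eq (y : ℝ) (hy : 0 ≤ y) :
    gInt y = Real.exp y / (1 + y) - 1 + EInt2 y := by
  have hder : ∀ x ∈ Set.uIcc (0:ℝ) y,
      HasDerivAt (fun x => Real.exp x / (1 + x))
        (Real.exp x / (1 + x) - Real.exp x / (1 + x) ^ 2) x := by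
    intro x hx
    have hx0 : 0 ≤ x := le_trans (le_min le_rfl hy) hx.1
    have h1 : (1:ℝ) + x ≠ 0 := by positivity
    have := (Real.hasDerivAt_exp x).div ((hasDerivAt_id x).const_add 1) h1
    refine this.congr_deriv ?_
    simp only [id_eq]
    field_simp
  have hint : IntervalIntegrable (fun x => Real.exp x / (1 + x) - Real.exp x / (1 + x) ^ 2)
      volume 0 y := ((cont1 le_rfl hy).sub (cont2 le_rfl hy)).intervalIntegrable
  have key := intervalIntegral.integral_eq_sub_of_hasDerivAt hder hint
  have hsplit : (∫ x in (0:ℝ)..y, (Real.exp x / (1 + x) - Real.exp x / (1 + x) ^ 2))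
      = gInt y - EInt2 y :=
    intervalIntegral.integral_sub (cont1 le_rfl hy).intervalIntegrable
      (cont2 le_rfl hy).intervalIntegrable
  rw [hsplit] at key
  have : gInt y = (Real.exp y / (1 + y) - Real.exp 0 / (1 + 0)) + EInt2 y := by linarith
  rw [this]
  norm_num

lemma EInt_nonneg (y : ℝ) (hy : 0 ≤ y) : 0 ≤ EInt2 y := by
  apply intervalIntegral.integral_nonneg hy
  intro x hx
  positivity

lemma EInt_bound (y : ℝ) (hy : 2 ≤ y) :
    EInt2 y ≤ y / 2 * Real.exp (y / 2) + 4 * Real.exp y / y ^ 2 := by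
  have hy0 : (0:ℝ) < y := by linarith
  have hsplit : EInt2 y = (∫ x in (0:ℝ)..(y/2), Real.exp x / (1 + x) ^ 2)
      + ∫ x in (y/2)..y, Real.exp x / (1 + x) ^ 2 := by
    unfold EInt2
    rw [intervalIntegral.integral_add_adjacent_intervals]
    · exact (cont2 le_rfl (by linarith)).intervalIntegrable
    · exact (cont2 (by linarith) (by linarith)).intervalIntegrable
  have h1 : (∫ x in (0:ℝ)..(y/2), Real.exp x / (1 + x) ^ 2) ≤ y / 2 * Real.exp (y / 2) := by
    have hm := intervalIntegral.integral_mono_on (a := (0:ℝ)) (b := y/2)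
      (f := fun x => Real.exp x / (1 + x) ^ 2) (g := fun _ => Real.exp (y/2)) (by linarith)
      ((cont2 le_rfl (by linarith)).intervalIntegrable)
      (intervalIntegrable_const (μ := volume))
      (fun x hx => by
        have hx0 : (0:ℝ) ≤ x := hx.1
        have h2 : (1:ℝ) ≤ (1+x)^2 := by nlinarith
        calc Real.exp x / (1+x)^2 ≤ Real.exp x := div_le_self (Real.exp_pos x).le h2
          _ ≤ Real.exp (y/2) := Real.exp_le_exp.2 hx.2)
    simpa [smul_eq_mul, mul_comm] using hm
  have h2 : (∫ x in (y/2)..y, Real.exp x / (1 + x) ^ 2) ≤ 4 * Real.exp y / y ^ 2 := by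
    have hgi : IntervalIntegrable (fun x => 4 / y ^ 2 * Real.exp x) volume (y/2) y :=
      (continuous_const.mul Real.continuous_exp).intervalIntegrable _ _
    have hm := intervalIntegral.integral_mono_on (a := y/2) (b := y)
      (f := fun x => Real.exp x / (1 + x) ^ 2) (g := fun x => 4 / y ^ 2 * Real.exp x)
      (by linarith)
      ((cont2 (by linarith) (by linarith)).intervalIntegrable)
      (hgi)
      (fun x hx => by
        have hx0 : y / 2 ≤ x := hx.1
        have hq : (0:ℝ) < y^2/4 := by positivity
        have hq2 : y^2/4 ≤ (1+x)^2 := by nlinarith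
        calc Real.exp x / (1+x)^2 ≤ Real.exp x / (y^2/4) :=
              div_le_div_of_nonneg_left (Real.exp_pos x).le hq hq2
          _ = 4 / y^2 * Real.exp x := by field_simp)
    have hev : (∫ x in (y/2)..y, 4 / y ^ 2 * Real.exp x) = 4 / y^2 * (Real.exp y - Real.exp (y/2)) := by
      rw [intervalIntegral.integral_const_mul, integral_exp]
    rw [hev] at hm
    have : 4 / y^2 * (Real.exp y - Real.exp (y/2)) ≤ 4 * Real.exp y / y^2 := by
      have h3 : (0:ℝ) < y^2 := by positivity
      have := Real.exp_pos (y/2)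
      rw [div_mul_eq_mul_div, div_le_div_iff₀ h3 h3]
      nlinarith
    linarith
  linarith

set_option maxHeartbeats 1000000 in
lemma gInt_ratio : Filter.Tendsto (fun y => gInt y * y / Real.exp y) Filter.atTop (nhds 1) := by
  have hmain : Filter.Tendsto
      (fun y => y / (1 + y) - y * Real.exp (-y) + y * Real.exp (-y) * EInt2 y)
      Filter.atTop (nhds 1) := by
    have t1 : Filter.Tendsto (fun y : ℝ => y / (1 + y)) Filter.atTop (nhds 1) := by
      have : Filter.Tendsto (fun y : ℝ => 1 - (1 + y)⁻¹) Filter.atTop (nhds 1) := by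
        have h2 : Filter.Tendsto (fun y : ℝ => (1 + y)⁻¹) Filter.atTop (nhds 0) :=
          (tendsto_atTop_add_const_left _ 1 tendsto_id).inv_tendsto_atTop
        simpa using tendsto_const_nhds.sub h2
      apply this.congr'
      filter_upwards [eventually_gt_atTop (0:ℝ)] with y hy
      have : (1:ℝ) + y ≠ 0 := by positivity
      field_simp
      ring
    have t2 : Filter.Tendsto (fun y : ℝ => y * Real.exp (-y)) Filter.atTop (nhds 0) := by
      simpa using Real.tendsto_pow_mul_exp_neg_atTop_nhds_zero 1
    have t3 : Filter.Tendsto (fun y : ℝ => y * Real.exp (-y) * EInt2 y) Filter.atTop (nhds 0) := by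
      apply squeeze_zero' (f := fun y => y * Real.exp (-y) * EInt2 y)
        (g := fun y => y^2 / 2 * Real.exp (-(y/2)) + 4 / y)
      · filter_upwards [eventually_ge_atTop (2:ℝ)] with y hy
        have := EInt_nonneg y (by linarith)
        have := Real.exp_pos (-y)
        positivity
      · filter_upwards [eventually_ge_atTop (2:ℝ)] with y hy
        have hy0 : (0:ℝ) < y := by linarith
        have hb := EInt_bound y hy
        have hexp : Real.exp (-y) > 0 := Real.exp_pos _
        have key : y * Real.exp (-y) * EInt2 y ≤
            y * Real.exp (-y) * (y / 2 * Real.exp (y / 2) + 4 * Real.exp y / y ^ 2) := by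
          apply mul_le_mul_of_nonneg_left hb
          positivity
        apply key.trans
        have e1 : Real.exp (-y) * Real.exp (y/2) = Real.exp (-(y/2)) := by
          rw [← Real.exp_add]; ring_nf
        have e2 : Real.exp (-y) * Real.exp y = 1 := by
          rw [← Real.exp_add]; simp
        have hyne : y ≠ 0 := hy0.ne'
        have expand : y * Real.exp (-y) * (y / 2 * Real.exp (y / 2) + 4 * Real.exp y / y ^ 2)
            = y^2 / 2 * (Real.exp (-y) * Real.exp (y/2)) + 4 * (Real.exp (-y) * Real.exp y) / y := by
          generalize Real.exp (-y) = a
          generalize Real.exp (y/2) = b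
          generalize Real.exp y = c
          field_simp
        rw [expand, e1, e2]
        norm_num
      · have s1 : Filter.Tendsto (fun y : ℝ => y^2 / 2 * Real.exp (-(y/2))) Filter.atTop (nhds 0) := by
          have comp : Filter.Tendsto (fun y : ℝ => y / 2) Filter.atTop Filter.atTop :=
            Filter.tendsto_id.atTop_div_const two_pos
          have := (Real.tendsto_pow_mul_exp_neg_atTop_nhds_zero 2).comp comp
          have h2 := this.const_mul (2:ℝ)
          simp only [mul_zero] at h2
          apply h2.congr
          intro y
          simp only [Function.comp_apply]
          ring
        have s2 : Filter.Tendsto (fun y : ℝ => 4 / y) Filter.atTop (nhds 0) := by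
          simpa [div_eq_mul_inv] using tendsto_inv_atTop_zero.const_mul (4:ℝ)
        simpa using s1.add s2
    have := (t1.sub t2).add t3
    simpa using this
  apply hmain.congr'
  filter_upwards [eventually_ge_atTop (0:ℝ)] with y hy
  rw [gInt_eq y hy]
  have h1 : (0:ℝ) < 1 + y := by linarith
  have h2 : Real.exp y ≠ 0 := (Real.exp_pos y).ne'
  rw [Real.exp_neg]
  have h3 : EInt2 y = EInt2 y := rfl
  generalize EInt2 y = Q
  generalize hE : Real.exp y = E at h2 ⊢
  field_simp



lemma gInt_ratio_inv : Filter.Tendsto (fun y => Real.exp y / (gInt y * y)) Filter.atTop (nhds 1) := by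
  have := gInt_ratio.inv₀ one_ne_zero
  norm_num at this
  exact this

lemma gInt_log_ratio : Filter.Tendsto (fun y => Real.log (gInt y) / y) Filter.atTop (nhds 1) := by
  have hρ : Filter.Tendsto (fun y => Real.log (gInt y * y / Real.exp y)) Filter.atTop (nhds 0) := by
    have hcont : ContinuousAt Real.log 1 := Real.continuousAt_log one_ne_zero
    have := hcont.tendsto.comp gInt_ratio
    simpa [Function.comp_def] using this
  have hmain : Filter.Tendsto
      (fun y => Real.log (gInt y * y / Real.exp y) / y + 1 - Real.log y / y)
      Filter.atTop (nhds 1) := by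
    have h1 : Filter.Tendsto (fun y => Real.log (gInt y * y / Real.exp y) / y)
        Filter.atTop (nhds 0) := hρ.div_atTop tendsto_id
    have h2 : Filter.Tendsto (fun y : ℝ => Real.log y / y) Filter.atTop (nhds 0) := by
      have := Real.tendsto_pow_log_div_mul_add_atTop 1 0 1 one_ne_zero
      simpa using this
    simpa using (h1.add tendsto_const_nhds).sub h2
  apply hmain.congr'
  have hev : ∀ᶠ y in Filter.atTop, (1:ℝ)/2 < gInt y * y / Real.exp y :=
    gInt_ratio.eventually (eventually_gt_nhds (by norm_num))
  filter_upwards [hev, eventually_gt_atTop (0:ℝ)] with y hy hy0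
  have hgy : 0 < gInt y * y / Real.exp y := lt_trans (by norm_num) hy
  have hgpos : 0 < gInt y := by
    have he := Real.exp_pos y
    by_contra h
    push_neg at h
    have : gInt y * y / Real.exp y ≤ 0 := by
      apply div_nonpos_of_nonpos_of_nonneg _ he.le
      exact mul_nonpos_of_nonpos_of_nonneg h hy0.le
    linarith
  rw [Real.log_div (by positivity) (Real.exp_pos y).ne', Real.log_mul hgpos.ne' hy0.ne',
    Real.log_exp]
  field_simp
  ring

section A
variable {lam : ℝ → ℝ}

-- part (b) precursor: e^{λ(t)}/(t λ(t)) → 1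
lemma ratio1 (htop : Filter.Tendsto lam Filter.atTop Filter.atTop)
    (hgl : ∀ t, 0 ≤ t → gInt (lam t) = t) :
    Filter.Tendsto (fun t => Real.exp (lam t) / (t * lam t)) Filter.atTop (nhds 1) := by
  have := gInt_ratio_inv.comp htop
  apply this.congr'
  filter_upwards [eventually_ge_atTop (0:ℝ)] with t ht
  simp only [Function.comp_apply]
  rw [hgl t ht]

-- part (a): λ(t)/log t → 1
lemma part_a (htop : Filter.Tendsto lam Filter.atTop Filter.atTop)
    (hgl : ∀ t, 0 ≤ t → gInt (lam t) = t) :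
    Filter.Tendsto (fun t => lam t / Real.log t) Filter.atTop (nhds 1) := by
  have h1 : Filter.Tendsto (fun t => Real.log t / lam t) Filter.atTop (nhds 1) := by
    have := gInt_log_ratio.comp htop
    apply this.congr'
    filter_upwards [eventually_ge_atTop (0:ℝ)] with t ht
    simp only [Function.comp_apply]
    rw [hgl t ht]
  have := h1.inv₀ one_ne_zero
  norm_num at this
  exact this

-- part (b)
lemma part_b (htop : Filter.Tendsto lam Filter.atTop Filter.atTop)
    (hgl : ∀ t, 0 ≤ t → gInt (lam t) = t) :
    Filter.Tendsto (fun t => Real.exp (lam t) / (t * Real.log t)) Filter.atTop (nhds 1) := by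
  have := (ratio1 htop hgl).mul (part_a htop hgl)
  norm_num at this
  apply this.congr'
  filter_upwards [htop.eventually (eventually_gt_atTop (0:ℝ)), eventually_gt_atTop (1:ℝ)]
    with t hl ht
  have h1 : lam t ≠ 0 := hl.ne'
  have h2 : Real.log t ≠ 0 := (Real.log_pos ht).ne'
  have h3 : t ≠ 0 := by linarith
  field_simp


-- part (c): t λ'(t) → 1
lemma part_c (htop : Filter.Tendsto lam Filter.atTop Filter.atTop)
    (hgl : ∀ t, 0 ≤ t → gInt (lam t) = t)
    (hode : ∀ t : ℝ, 0 ≤ t → deriv lam t = Real.exp (-lam t) * (1 + lam t)) :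
    Filter.Tendsto (fun t => t * deriv lam t) Filter.atTop (nhds 1) := by
  have hinv : Filter.Tendsto (fun t => t * lam t / Real.exp (lam t)) Filter.atTop (nhds 1) := by
    have := (ratio1 htop hgl).inv₀ one_ne_zero
    norm_num at this
    exact this
  have hfrac : Filter.Tendsto (fun t => (lam t)⁻¹ + 1) Filter.atTop (nhds 1) := by
    simpa using (htop.inv_tendsto_atTop).add (tendsto_const_nhds (x := (1:ℝ)))
  have := hinv.mul hfrac
  norm_num at this
  apply this.congr'
  filter_upwards [htop.eventually (eventually_gt_atTop (0:ℝ)), eventually_ge_atTop (0:ℝ)]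
    with t hl ht
  rw [hode t ht, Real.exp_neg]
  have he : Real.exp (lam t) ≠ 0 := (Real.exp_pos _).ne'
  field_simp

end A


noncomputable def phiF (lam : ℝ → ℝ) (s : ℝ) : ℝ := (deriv lam s - 1) / (lam s) ^ 2
noncomputable def KInt (lam : ℝ → ℝ) (t : ℝ) : ℝ := ∫ s in (1:ℝ)..t, ((lam s) ^ 2)⁻¹

section U
variable {lam : ℝ → ℝ}

lemma exp_bound_aux {x : ℝ} (hx : 0 ≤ x) : |Real.exp (-x) * (1 + x) - 1| ≤ x ^ 2 := by
  rw [abs_le]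
  constructor
  · have h1 : 1 - x ≤ Real.exp (-x) := by
      have := Real.add_one_le_exp (-x); linarith
    nlinarith [Real.exp_pos (-x)]
  · have h2 : Real.exp (-x) * (1 + x) ≤ 1 := by
      have h3 : 1 + x ≤ Real.exp x := by linarith [Real.add_one_le_exp x]
      have h4 := Real.exp_pos (-x)
      calc Real.exp (-x) * (1 + x) ≤ Real.exp (-x) * Real.exp x :=
            mul_le_mul_of_nonneg_left h3 h4.le
        _ = 1 := by rw [← Real.exp_add]; simp
    nlinarith
  
lemma phiF_bound (hode : ∀ t : ℝ, 0 ≤ t → deriv lam t = Real.exp (-lam t) * (1 + lam t))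
    (hpos : ∀ t, 0 < t → 0 < lam t) {s : ℝ} (hs : 0 < s) : |phiF lam s| ≤ 1 := by
  have hl := hpos s hs
  unfold phiF
  rw [hode s hs.le, abs_div, abs_of_pos (by positivity : (0:ℝ) < lam s ^ 2),
    div_le_one (by positivity)]
  exact exp_bound_aux hl.le

lemma phiF_meas (hdiff : Differentiable ℝ lam) : Measurable (phiF lam) := by
  unfold phiF
  exact ((measurable_deriv lam).sub measurable_const).div
    ((hdiff.continuous.measurable).pow_const 2)

lemma phiF_intervalIntegrable (hdiff : Differentiable ℝ lam)
    (hode : ∀ t : ℝ, 0 ≤ t → deriv lam t = Real.exp (-lam t) * (1 + lam t))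
    (hpos : ∀ t, 0 < t → 0 < lam t) {a b : ℝ} (ha : 0 ≤ a) (hb : 0 ≤ b) :
    IntervalIntegrable (phiF lam) volume a b := by
  rw [intervalIntegrable_iff]
  have hc : IntegrableOn (fun _ => (1:ℝ)) (Set.uIoc a b) volume :=
    integrableOn_const measure_Ioc_lt_top.ne
  apply Integrable.mono' hc ((phiF_meas hdiff).stronglyMeasurable.aestronglyMeasurable).restrict
  rw [ae_restrict_iff' measurableSet_uIoc]
  apply ae_of_all
  intro s hs
  have hs0 : 0 < s := lt_of_le_of_lt (le_min ha hb) hs.1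
  simpa using phiF_bound hode hpos hs0

lemma deriv_contOn (hdiff : Differentiable ℝ lam)
    (hode : ∀ t : ℝ, 0 ≤ t → deriv lam t = Real.exp (-lam t) * (1 + lam t))
    {s : Set ℝ} (hs : s ⊆ Set.Ici 0) : ContinuousOn (deriv lam) s := by
  apply ContinuousOn.congr (f := fun t => Real.exp (-lam t) * (1 + lam t))
  · exact ((Real.continuous_exp.comp hdiff.continuous.neg).mul
      (continuous_const.add hdiff.continuous)).continuousOn
  · intro x hx
    exact hode x (hs hx)

lemma inv_sq_contOn (hdiff : Differentiable ℝ lam) (hpos : ∀ t, 0 < t → 0 < lam t)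
    {s : Set ℝ} (hs : s ⊆ Set.Ioi 0) : ContinuousOn (fun x => ((lam x) ^ 2)⁻¹) s := by
  apply ContinuousOn.inv₀ ((hdiff.continuous.pow 2).continuousOn)
  intro x hx
  have := hpos x (hs hx)
  show (lam x)^2 ≠ 0
  positivity

lemma KInt_integrable (hdiff : Differentiable ℝ lam) (hpos : ∀ t, 0 < t → 0 < lam t)
    {a b : ℝ} (ha : 0 < a) (hb : 0 < b) :
    IntervalIntegrable (fun x => ((lam x) ^ 2)⁻¹) volume a b := by
  apply ContinuousOn.intervalIntegrable
  apply inv_sq_contOn hdiff hpos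
  intro x hx
  exact lt_of_lt_of_le (lt_min ha hb) hx.1

lemma phiF_split (hdiff : Differentiable ℝ lam)
    (hode : ∀ t : ℝ, 0 ≤ t → deriv lam t = Real.exp (-lam t) * (1 + lam t))
    (hpos : ∀ t, 0 < t → 0 < lam t) {t : ℝ} (ht : 1 ≤ t) :
    (∫ s in (0:ℝ)..t, phiF lam s) = (∫ s in (0:ℝ)..1, phiF lam s)
      + ((lam 1)⁻¹ - (lam t)⁻¹) - KInt lam t := by
  have ht0 : (0:ℝ) ≤ t := by linarith
  have hsplit : (∫ s in (0:ℝ)..t, phiF lam s)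
      = (∫ s in (0:ℝ)..1, phiF lam s) + ∫ s in (1:ℝ)..t, phiF lam s := by
    rw [intervalIntegral.integral_add_adjacent_intervals
      (phiF_intervalIntegrable hdiff hode hpos le_rfl zero_le_one)
      (phiF_intervalIntegrable hdiff hode hpos zero_le_one ht0)]
  have hderint : IntervalIntegrable (fun s => deriv lam s / (lam s) ^ 2) volume 1 t := by
    apply ContinuousOn.intervalIntegrable
    apply ContinuousOn.div
    · apply deriv_contOn hdiff hode
      intro x hx
      exact le_trans (le_min zero_le_one (by linarith)) hx.1
    · exact (hdiff.continuous.pow 2).continuousOn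
    · intro x hx
      have hx0 : (0:ℝ) < x := lt_of_lt_of_le (lt_min one_pos (by linarith)) hx.1
      have := hpos x hx0
      positivity
  have hftc : (∫ s in (1:ℝ)..t, deriv lam s / (lam s) ^ 2) = (lam 1)⁻¹ - (lam t)⁻¹ := by
    have hder : ∀ x ∈ Set.uIcc (1:ℝ) t,
        HasDerivAt (fun s => -(lam s)⁻¹) (deriv lam x / (lam x) ^ 2) x := by
      intro x hx
      have hx0 : (0:ℝ) < x := lt_of_lt_of_le (lt_min one_pos (by linarith)) hx.1
      have hlx := hpos x hx0
      have := ((hdiff x).hasDerivAt.inv hlx.ne').neg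
      refine this.congr_deriv ?_
      ring
    rw [intervalIntegral.integral_eq_sub_of_hasDerivAt hder hderint]
    ring
  have hphidecomp : (∫ s in (1:ℝ)..t, phiF lam s)
      = (∫ s in (1:ℝ)..t, deriv lam s / (lam s) ^ 2) - KInt lam t := by
    unfold KInt
    rw [← intervalIntegral.integral_sub hderint (KInt_integrable hdiff hpos one_pos (by linarith))]
    apply intervalIntegral.integral_congr
    intro x hx
    have hx0 : (0:ℝ) < x := lt_of_lt_of_le (lt_min one_pos (by linarith)) hx.1
    have := hpos x hx0
    unfold phiF
    field_simp
  rw [hsplit, hphidecomp, hftc]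
  ring

end U

section K
variable {lam : ℝ → ℝ}

lemma logsq_div : Filter.Tendsto (fun t : ℝ => Real.log t ^ 2 / t) Filter.atTop (nhds 0) := by
  have := Real.tendsto_pow_log_div_mul_add_atTop 1 0 2 one_ne_zero
  simpa using this

lemma log_div : Filter.Tendsto (fun t : ℝ => Real.log t / t) Filter.atTop (nhds 0) := by
  have := Real.tendsto_pow_log_div_mul_add_atTop 1 0 1 one_ne_zero
  simpa using this

lemma M_tendsto (hpos : ∀ t, 0 < t → 0 < lam t)
    (hla : Filter.Tendsto (fun t => lam t / Real.log t) Filter.atTop (nhds 1)) :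
    Filter.Tendsto (fun t => t / (lam t) ^ 2) Filter.atTop Filter.atTop := by
  have hsq : Filter.Tendsto (fun t => (lam t) ^ 2 / t) Filter.atTop (nhds 0) := by
    have hmul := (hla.mul hla).mul logsq_div
    norm_num at hmul
    apply hmul.congr'
    filter_upwards [eventually_gt_atTop (1:ℝ)] with t ht
    have hlog : Real.log t ≠ 0 := (Real.log_pos ht).ne'
    have ht0 : t ≠ 0 := by positivity
    field_simp
  have hev : ∀ᶠ t in Filter.atTop, (lam t) ^ 2 / t ∈ Set.Ioi (0:ℝ) := by
    filter_upwards [eventually_gt_atTop (0:ℝ)] with t ht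
    have := hpos t ht
    simp only [Set.mem_Ioi]
    positivity
  have := (tendsto_nhdsWithin_iff.2 ⟨hsq, hev⟩).inv_tendsto_nhdsGT_zero
  apply this.congr
  intro t
  rw [Pi.inv_apply, inv_div]

lemma arith_K {δ Q Mt Ms1 Ks1 K : ℝ} (hδ0 : 0 < δ) (hδ : δ ≤ 1/2)
    (hQ0 : 0 ≤ Q) (hMs1 : 0 ≤ Ms1) (hMt1 : 1 ≤ Mt)
    (hup : Mt - Ms1 ≤ Q) (hlow : (1-δ)*Q ≤ Mt - Ms1)
    (hMs1C : Ms1 ≤ δ*Mt) (hKs1C : Ks1 ≤ δ*Mt) (hKs10 : 0 ≤ Ks1)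
    (hKsplit : K = Ks1 + Q) : |K/Mt - 1| ≤ 3*δ := by
  have hMt0 : 0 < Mt := by linarith
  have hQub : Q ≤ (1 + 2*δ) * Mt := by nlinarith
  have hub2 : K ≤ (1 + 3*δ) * Mt := by nlinarith
  have hlb2 : (1 - δ) * Mt ≤ K := by nlinarith
  rw [abs_le]
  constructor
  · rw [le_sub_iff_add_le, le_div_iff₀ hMt0]
    nlinarith
  · rw [sub_le_iff_le_add, div_le_iff₀ hMt0]
    nlinarith

lemma KInt_ratio (hdiff : Differentiable ℝ lam)
    (hode : ∀ t : ℝ, 0 ≤ t → deriv lam t = Real.exp (-lam t) * (1 + lam t))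
    (hpos : ∀ t, 0 < t → 0 < lam t)
    (htop : Filter.Tendsto lam Filter.atTop Filter.atTop)
    (tc : Filter.Tendsto (fun t => t * deriv lam t) Filter.atTop (nhds 1))
    (hla : Filter.Tendsto (fun t => lam t / Real.log t) Filter.atTop (nhds 1)) :
    Filter.Tendsto (fun t => KInt lam t * (lam t) ^ 2 / t) Filter.atTop (nhds 1) := by
  have hM := M_tendsto hpos hla
  have h0h : Filter.Tendsto (fun s => 2 * (s * deriv lam s) * (lam s)⁻¹)
      Filter.atTop (nhds 0) := by
    have := (tc.const_mul (2:ℝ)).mul htop.inv_tendsto_atTop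
    simpa using this
  rw [Metric.tendsto_nhds]
  intro ε hε
  set δ := min (ε/4) (1/2) with hδdef
  have hδ0 : 0 < δ := lt_min (by linarith) (by norm_num)
  have hδhalf : δ ≤ 1/2 := min_le_right _ _
  have hδε : 3 * δ < ε := by
    have : δ ≤ ε/4 := min_le_left _ _
    linarith
  obtain ⟨a, ha⟩ := Filter.eventually_atTop.1
    (h0h.eventually (eventually_le_nhds hδ0))
  set s1 := max a 1 with hs1def
  have hs11 : (1:ℝ) ≤ s1 := le_max_right _ _
  have hs10 : (0:ℝ) < s1 := by linarith
  -- properties of h on [s1, ∞)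
  have hhle : ∀ s, s1 ≤ s → 2 * (s * deriv lam s) * (lam s)⁻¹ ≤ δ :=
    fun s hs => ha s (le_trans (le_max_left _ _) hs)
  have hh0 : ∀ s, s1 ≤ s → 0 ≤ 2 * (s * deriv lam s) * (lam s)⁻¹ := by
    intro s hs
    have hspos : (0:ℝ) < s := lt_of_lt_of_le hs10 hs
    have hls := hpos s hspos
    have hd : 0 ≤ deriv lam s := by
      rw [hode s hspos.le]
      positivity
    positivity
  -- derivative of M
  have hMder : ∀ s, 0 < s → HasDerivAt (fun x => x / (lam x) ^ 2)
      (((lam s) ^ 2)⁻¹ * (1 - 2 * (s * deriv lam s) * (lam s)⁻¹)) s := by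
    intro s hs
    have hls := hpos s hs
    have hsq : (lam s) ^ 2 ≠ 0 := by positivity
    have hprod := (hasDerivAt_id s).mul (((hdiff s).hasDerivAt.pow 2).inv hsq)
    have : (fun x => x / (lam x) ^ 2) = fun x => x * ((lam x) ^ 2)⁻¹ := by
      funext x; rw [div_eq_mul_inv]
    rw [this]
    refine hprod.congr_deriv ?_
    have hls' : lam s ≠ 0 := hls.ne'
    simp only [id_eq, Pi.inv_apply, Pi.pow_apply]
    field_simp
    ring
  -- now the eventual bound
  have hKs1 : 0 ≤ KInt lam s1 := by
    apply intervalIntegral.integral_nonneg hs11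
    intro x hx
    positivity
  have hMs1 : 0 ≤ s1 / (lam s1) ^ 2 := by
    have := hpos s1 hs10
    positivity
  set C1 := max (s1 / (lam s1) ^ 2) (KInt lam s1) with hC1def
  filter_upwards [eventually_ge_atTop s1,
    hM.eventually (eventually_ge_atTop (max 1 (C1/δ))), eventually_gt_atTop (0:ℝ)]
    with t hts1 hMt ht0
  have hMt1 : 1 ≤ t / (lam t)^2 := le_trans (le_max_left _ _) hMt
  have hMtC : C1 / δ ≤ t / (lam t)^2 := le_trans (le_max_right _ _) hMt
  have hMtpos : 0 < t / (lam t)^2 := by linarith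
  set Mt := t / (lam t)^2 with hMtdef
  set Ms1 := s1 / (lam s1)^2 with hMs1def
  have hMs1C : Ms1 ≤ δ * Mt := by
    have h1 : Ms1 ≤ C1 := le_max_left _ _
    have := (div_le_iff₀ hδ0).1 hMtC
    nlinarith
  have hKs1C : KInt lam s1 ≤ δ * Mt := by
    have h1 : KInt lam s1 ≤ C1 := le_max_right _ _
    have := (div_le_iff₀ hδ0).1 hMtC
    nlinarith
  -- FTC for M on [s1, t]
  have hcontd : ContinuousOn (fun s => ((lam s) ^ 2)⁻¹ * (1 - 2 * (s * deriv lam s) * (lam s)⁻¹))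
      (Set.uIcc s1 t) := by
    have hsub : Set.uIcc s1 t ⊆ Set.Ioi (0:ℝ) := by
      intro x hx
      have : min s1 t ≤ x := hx.1
      have : s1 ≤ x ∨ t ≤ x := by rcases min_le_iff.1 this with h|h; exact Or.inl (by linarith)|>.imp id id; exact Or.inr h
      rcases this with h|h
      · exact lt_of_lt_of_le hs10 h
      · exact lt_of_lt_of_le ht0 h
    apply ContinuousOn.mul (inv_sq_contOn hdiff hpos hsub)
    apply ContinuousOn.sub continuousOn_const
    apply ContinuousOn.mul
    · apply ContinuousOn.mul continuousOn_const
      apply ContinuousOn.mul continuousOn_id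
      apply deriv_contOn hdiff hode
      intro x hx
      exact (Set.mem_Ioi.1 (hsub hx)).le
    · apply ContinuousOn.inv₀ hdiff.continuous.continuousOn
      intro x hx
      exact (hpos x (hsub hx)).ne'
  have hMint : IntervalIntegrable
      (fun s => ((lam s) ^ 2)⁻¹ * (1 - 2 * (s * deriv lam s) * (lam s)⁻¹)) volume s1 t :=
    hcontd.intervalIntegrable
  have hftcM : (∫ s in s1..t, ((lam s) ^ 2)⁻¹ * (1 - 2 * (s * deriv lam s) * (lam s)⁻¹))
      = Mt - Ms1 := by
    rw [intervalIntegral.integral_eq_sub_of_hasDerivAt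
      (fun x hx => hMder x (by
        have : min s1 t ≤ x := hx.1
        have hmin : s1 ≤ x := by rw [min_eq_left hts1] at this; exact this
        linarith)) hMint]
  set Q := ∫ s in s1..t, ((lam s) ^ 2)⁻¹ with hQdef
  have hQint : IntervalIntegrable (fun s => ((lam s) ^ 2)⁻¹) volume s1 t :=
    KInt_integrable hdiff hpos hs10 ht0
  have hQ0 : 0 ≤ Q := by
    apply intervalIntegral.integral_nonneg hts1
    intro x hx
    have := hpos x (lt_of_lt_of_le hs10 hx.1)
    positivity
  have hup : Mt - Ms1 ≤ Q := by
    rw [← hftcM, hQdef]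
    apply intervalIntegral.integral_mono_on hts1 hMint hQint
    intro x hx
    have hx1 : s1 ≤ x := hx.1
    have hlx := hpos x (lt_of_lt_of_le hs10 hx1)
    have h1 := hh0 x hx1
    have hinv : 0 ≤ ((lam x)^2)⁻¹ := by positivity
    nlinarith
  have hlow : (1 - δ) * Q ≤ Mt - Ms1 := by
    rw [← hftcM]
    have : (1 - δ) * Q = ∫ s in s1..t, (1 - δ) * ((lam s) ^ 2)⁻¹ := by
      rw [hQdef, intervalIntegral.integral_const_mul]
    rw [this]
    apply intervalIntegral.integral_mono_on hts1 (hQint.const_mul _) hMint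
    intro x hx
    have hx1 : s1 ≤ x := hx.1
    have hlx := hpos x (lt_of_lt_of_le hs10 hx1)
    have h1 := hhle x hx1
    have hinv : 0 ≤ ((lam x)^2)⁻¹ := by positivity
    nlinarith
  have hKsplit : KInt lam t = KInt lam s1 + Q := by
    rw [hQdef, KInt, KInt, intervalIntegral.integral_add_adjacent_intervals
      (KInt_integrable hdiff hpos one_pos hs10) hQint]
  have heq : KInt lam t * (lam t) ^ 2 / t = KInt lam t / Mt := by
    rw [hMtdef, div_div_eq_mul_div]
  rw [Real.dist_eq, heq]
  calc |KInt lam t / Mt - 1| ≤ 3*δ :=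
        arith_K hδ0 hδhalf hQ0 hMs1 hMt1 hup hlow hMs1C hKs1C hKs1 hKsplit
    _ < ε := hδε

section DE
variable {lam : ℝ → ℝ}

lemma inv_ratio {f : ℝ → ℝ} (h : Filter.Tendsto (fun t => f t / Real.log t) Filter.atTop (nhds 1)) :
    Filter.Tendsto (fun t => Real.log t / f t) Filter.atTop (nhds 1) := by
  have := h.inv₀ one_ne_zero
  norm_num at this
  exact this

lemma part_d (hdiff : Differentiable ℝ lam)
    (hode : ∀ t : ℝ, 0 ≤ t → deriv lam t = Real.exp (-lam t) * (1 + lam t))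
    (hpos : ∀ t, 0 < t → 0 < lam t)
    (hla : Filter.Tendsto (fun t => lam t / Real.log t) Filter.atTop (nhds 1))
    (hKr : Filter.Tendsto (fun t => KInt lam t * (lam t) ^ 2 / t) Filter.atTop (nhds 1)) :
    Filter.Tendsto (fun t => -uAux lam t * Real.log t / t) Filter.atTop (nhds 1) := by
  have hlg := inv_ratio hla
  set C := (∫ s in (0:ℝ)..1, phiF lam s) + (lam 1)⁻¹ with hCdef
  have hmain : Filter.Tendsto (fun t =>
      (KInt lam t * (lam t) ^ 2 / t) * (Real.log t / lam t)
        - C * ((lam t / Real.log t) * (Real.log t ^ 2 / t))) Filter.atTop (nhds 1) := by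
    have := (hKr.mul hlg).sub (((hla.mul logsq_div)).const_mul C)
    norm_num at this
    exact this
  apply hmain.congr'
  filter_upwards [eventually_gt_atTop (1:ℝ)] with t ht
  have ht1 : (1:ℝ) ≤ t := ht.le
  have ht0 : (0:ℝ) < t := by linarith
  have hlt := hpos t ht0
  have hlog := Real.log_pos ht
  have hsp := phiF_split hdiff hode hpos ht1
  have hu : uAux lam t = C * lam t - lam t * KInt lam t := by
    show 1 + lam t * (∫ s in (0:ℝ)..t, phiF lam s) = _
    rw [hsp, hCdef]
    field_simp
    ring
  rw [hu]
  field_simp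
  ring

lemma part_e (hdiff : Differentiable ℝ lam)
    (hode : ∀ t : ℝ, 0 ≤ t → deriv lam t = Real.exp (-lam t) * (1 + lam t))
    (hpos : ∀ t, 0 < t → 0 < lam t)
    (htop : Filter.Tendsto lam Filter.atTop Filter.atTop)
    (tc : Filter.Tendsto (fun t => t * deriv lam t) Filter.atTop (nhds 1))
    (hla : Filter.Tendsto (fun t => lam t / Real.log t) Filter.atTop (nhds 1))
    (hKr : Filter.Tendsto (fun t => KInt lam t * (lam t) ^ 2 / t) Filter.atTop (nhds 1)) :
    Filter.Tendsto (fun t => -deriv (uAux lam) t * Real.log t) Filter.atTop (nhds 1) := by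
  have hlg := inv_ratio hla
  set C := (∫ s in (0:ℝ)..1, phiF lam s) + (lam 1)⁻¹ with hCdef
  have hd0 : Filter.Tendsto (fun t => deriv lam t) Filter.atTop (nhds 0) := by
    have hcomp : Filter.Tendsto (fun x : ℝ => Real.exp (-x) * (1 + x)) Filter.atTop (nhds 0) := by
      have h1 := Real.tendsto_pow_mul_exp_neg_atTop_nhds_zero 1
      have h2 := Real.tendsto_exp_neg_atTop_nhds_zero
      have := h2.add h1
      norm_num at this
      apply this.congr
      intro x
      ring
    have := hcomp.comp htop
    apply this.congr'
    filter_upwards [eventually_ge_atTop (0:ℝ)] with t ht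
    simp only [Function.comp_apply]
    rw [hode t ht]
  have hmain : Filter.Tendsto (fun t =>
      (1 - deriv lam t) * (Real.log t / lam t)
      - C * ((t * deriv lam t) * (Real.log t / t))
      + ((t * deriv lam t) * (Real.log t / lam t)) * t⁻¹
      + ((t * deriv lam t) * (KInt lam t * (lam t) ^ 2 / t) * (Real.log t / lam t)) * (lam t)⁻¹)
      Filter.atTop (nhds 1) := by
    have := ((((tendsto_const_nhds (x := (1:ℝ))).sub hd0).mul hlg).sub
        ((tc.mul log_div).const_mul C)).add
      (((tc.mul hlg).mul tendsto_inv_atTop_zero).add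
        (((tc.mul hKr).mul hlg).mul htop.inv_tendsto_atTop))
    norm_num at this
    apply this.congr
    intro t
    ring
  apply hmain.congr'
  filter_upwards [eventually_gt_atTop (1:ℝ)] with t ht
  have ht1 : (1:ℝ) ≤ t := ht.le
  have ht0 : (0:ℝ) < t := by linarith
  have hlt := hpos t ht0
  have hlog := Real.log_pos ht
  have hsp := phiF_split hdiff hode hpos ht1
  -- derivative of uAux at t
  have hIder : HasDerivAt (fun x => ∫ s in (0:ℝ)..x, phiF lam s) (phiF lam t) t := by
    apply intervalIntegral.integral_hasDerivAt_right
      (phiF_intervalIntegrable hdiff hode hpos le_rfl ht0.le)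
      ((phiF_meas hdiff).stronglyMeasurable.stronglyMeasurableAtFilter)
    have hcont : ContinuousAt (fun s => (Real.exp (-lam s) * (1 + lam s) - 1) / (lam s) ^ 2) t := by
      apply ContinuousAt.div
      · exact (((Real.continuous_exp.comp hdiff.continuous.neg).mul
          (continuous_const.add hdiff.continuous)).sub continuous_const).continuousAt
      · exact (hdiff.continuous.pow 2).continuousAt
      · positivity
    apply hcont.congr
    filter_upwards [isOpen_Ioi.mem_nhds (Set.mem_Ioi.2 ht0)] with s hs
    unfold phiF
    rw [hode s (le_of_lt hs)]
  have huder : HasDerivAt (uAux lam)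
      (deriv lam t * (∫ s in (0:ℝ)..t, phiF lam s) + lam t * phiF lam t) t := by
    have := ((hdiff t).hasDerivAt.mul hIder).const_add 1
    exact this
  rw [huder.deriv, hsp, hCdef]
  have hphi : lam t * phiF lam t = (deriv lam t - 1) / lam t := by
    unfold phiF
    field_simp
  rw [hphi]
  generalize (∫ s in (0:ℝ)..1, phiF lam s) = A
  field_simp
  ring
end DE

/-- Asymptotic behavior: `λ(t) ~ log t`, `e^{λ(t)} ~ t log t`, `λ'(t) ~ 1/t`,
`u(t) ~ -t/log t`, `u'(t) ~ -1/log t` as `t → ∞`. -/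
theorem asymptotics_lambda_u (lam : ℝ → ℝ) (hdiff : Differentiable ℝ lam) (h0 : lam 0 = 0)
    (hode : ∀ t : ℝ, 0 ≤ t → deriv lam t = Real.exp (-lam t) * (1 + lam t)) :
    Filter.Tendsto (fun t => lam t / Real.log t) Filter.atTop (nhds 1) ∧
    Filter.Tendsto (fun t => Real.exp (lam t) / (t * Real.log t)) Filter.atTop (nhds 1) ∧
    Filter.Tendsto (fun t => t * deriv lam t) Filter.atTop (nhds 1) ∧
    Filter.Tendsto (fun t => -uAux lam t * Real.log t / t) Filter.atTop (nhds 1) ∧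
    Filter.Tendsto (fun t => -deriv (uAux lam) t * Real.log t) Filter.atTop (nhds 1) := by
  have hnn := lam_nonneg hdiff h0 hode
  have hpos := lam_pos hdiff h0 hode
  have htop := lam_tendsto hdiff h0 hode hnn
  have hgl := g_lam hdiff h0 hode hnn
  have ha := part_a htop hgl
  have hb := part_b htop hgl
  have hc := part_c htop hgl hode
  have hKr := KInt_ratio hdiff hode hpos htop hc ha
  have hd := part_d hdiff hode hpos ha hKr
  have he := part_e hdiff hode hpos htop hc ha hKr
  exact ⟨ha, hb, hc, hd, he⟩
end K
end
end

section
/- Eventual positivity of H_r (Claim 'Positivity of H_r'): Fix an integer Δ ≥ 3. There exists θ > 0 such that H_r(t) > 0 for every r ∈ R_Δ and every t ≥ θ. -/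
open Real MeasureTheory Filter

noncomputable section

-- ===================== auxiliary development =====================

section HerrAux
open Set Topology

set_option maxHeartbeats 1000000

/-- The polynomial `F(x) = Σ_{k=2}^{Δ-1} x^k/k! s_{k+1}` appearing in the integrand. -/
def Fp (Δ : ℕ) (r : ℕ → ℝ) (x : ℝ) : ℝ :=
  ∑ k ∈ Finset.Icc 2 (Δ - 1), x ^ k / (Nat.factorial k : ℝ) * tailS Δ r (k + 1)

/-- `Φ(y) = ∫_0^y e^x/(1+x)² F(x) dx`. -/
def Phi (Δ : ℕ) (r : ℕ → ℝ) (y : ℝ) : ℝ :=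
  ∫ x in (0:ℝ)..y, Real.exp x / (1 + x) ^ 2 * Fp Δ r x

/-- `G(y) = Σ_{k=0}^{Δ-2} y^k/k! r_{k+2}`. -/
def Gp (Δ : ℕ) (r : ℕ → ℝ) (y : ℝ) : ℝ :=
  ∑ k ∈ Finset.range (Δ - 1), y ^ k / (Nat.factorial k : ℝ) * r (k + 2)

lemma Fp_continuous (Δ : ℕ) (r : ℕ → ℝ) : Continuous (Fp Δ r) := by
  unfold Fp
  exact continuous_finset_sum _ fun k _ => by continuity

lemma g_continuousOn (Δ : ℕ) (r : ℕ → ℝ) :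
    ContinuousOn (fun x => Real.exp x / (1 + x) ^ 2 * Fp Δ r x) (Ioi (-1 : ℝ)) := by
  apply ContinuousOn.mul _ (Fp_continuous Δ r).continuousOn
  apply ContinuousOn.div continuous_exp.continuousOn
    ((continuous_const.add continuous_id).pow 2).continuousOn
  intro x hx
  have : (0:ℝ) < 1 + x := by simp only [mem_Ioi] at hx; linarith
  exact pow_ne_zero _ this.ne'

section LamFacts

variable (lam : ℝ → ℝ) (hdiff : Differentiable ℝ lam) (h0 : lam 0 = 0)
  (hode : ∀ t : ℝ, 0 ≤ t → deriv lam t = Real.exp (-lam t) * (1 + lam t))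

include hdiff h0 hode

lemma lam_neg_one_lt : ∀ t, 0 ≤ t → -1 < lam t := by
  by_contra h
  push_neg at h
  set S : Set ℝ := {t | 0 ≤ t ∧ lam t ≤ -1} with hS
  have hne : S.Nonempty := by
    obtain ⟨t, ht, hlt⟩ := h
    exact ⟨t, ht, hlt⟩
  have hclosed : IsClosed S := by
    have heq : S = Ici 0 ∩ lam ⁻¹' (Iic (-1)) := by
      ext x; simp only [hS, mem_setOf_eq, mem_inter_iff, mem_Ici, mem_preimage, mem_Iic]
    rw [heq]
    exact isClosed_Ici.inter (isClosed_Iic.preimage hdiff.continuous)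
  have hbdd : BddBelow S := ⟨0, fun x hx => hx.1⟩
  set c := sInf S with hc
  have hcS : c ∈ S := hclosed.csInf_mem hne hbdd
  have hc0 : 0 < c := by
    rcases lt_or_eq_of_le hcS.1 with h' | h'
    · exact h'
    · exfalso
      have : lam c ≤ -1 := hcS.2
      rw [← h', h0] at this
      linarith
  have hlow : ∀ s, 0 ≤ s → s < c → -1 < lam s := by
    intro s hs hsc
    by_contra hcon
    push_neg at hcon
    have : s ∈ S := ⟨hs, hcon⟩
    exact absurd (csInf_le hbdd this) (not_le.2 hsc)
  have hmono : StrictMonoOn lam (Icc 0 c) := by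
    apply strictMonoOn_of_deriv_pos (convex_Icc 0 c) (hdiff.continuous.continuousOn)
    intro x hx
    rw [interior_Icc] at hx
    rw [hode x hx.1.le]
    have h1 := hlow x hx.1.le hx.2
    have h2 : (0:ℝ) < 1 + lam x := by linarith
    positivity
  have := hmono (Set.left_mem_Icc.2 hc0.le) (Set.right_mem_Icc.2 hc0.le) hc0
  rw [h0] at this
  linarith [hcS.2]

lemma deriv_lam_pos : ∀ t, 0 ≤ t → 0 < deriv lam t := by
  intro t ht
  rw [hode t ht]
  have h1 := lam_neg_one_lt lam hdiff h0 hode t ht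
  have h2 : (0:ℝ) < 1 + lam t := by linarith
  positivity

lemma lam_strictMonoOn : StrictMonoOn lam (Ici 0) := by
  apply strictMonoOn_of_deriv_pos (convex_Ici 0) (hdiff.continuous.continuousOn)
  intro x hx
  rw [interior_Ici] at hx
  exact deriv_lam_pos lam hdiff h0 hode x (le_of_lt hx)

lemma lam_nonneg_s13 : ∀ t, 0 ≤ t → 0 ≤ lam t := by
  intro t ht
  rcases eq_or_lt_of_le ht with h | h
  · rw [← h, h0]
  · have := lam_strictMonoOn lam hdiff h0 hode (mem_Ici.2 le_rfl) (mem_Ici.2 ht) h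
    rw [h0] at this; linarith

lemma lam_pos_s13 : ∀ t, 0 < t → 0 < lam t := by
  intro t ht
  have := lam_strictMonoOn lam hdiff h0 hode (mem_Ici.2 le_rfl) (mem_Ici.2 ht.le) ht
  rwa [h0] at this

lemma lam_unbounded : ∀ M : ℝ, ∃ θ : ℝ, 0 < θ ∧ ∀ t, θ ≤ t → M ≤ lam t := by
  intro M
  by_contra h
  push_neg at h
  have hbound : ∀ t, 0 ≤ t → lam t < M := by
    intro t ht
    obtain ⟨t', ht', hlt⟩ := h (t + 1) (by linarith)
    have hle : lam t ≤ lam t' :=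
      (lam_strictMonoOn lam hdiff h0 hode).monotoneOn (mem_Ici.2 ht)
        (mem_Ici.2 (by linarith)) (by linarith)
    linarith
  have hMpos : 0 < M := lt_of_le_of_lt (by rw [h0]) (hbound 0 le_rfl)
  set cst := Real.exp (-M) with hcst
  have hgrow : ∀ t, 0 ≤ t → cst * t ≤ lam t := by
    intro t ht
    have hm : MonotoneOn (fun s => lam s - cst * s) (Ici 0) := by
      apply monotoneOn_of_deriv_nonneg (convex_Ici 0)
      · exact (hdiff.continuous.sub (by continuity)).continuousOn
      · exact (hdiff.sub (differentiable_id.const_mul cst)).differentiableOn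
      · intro x hx
        rw [interior_Ici] at hx
        have hx0 : (0:ℝ) ≤ x := hx.le
        have hd : HasDerivAt (fun s => lam s - cst * s) (deriv lam x - cst * 1) x :=
          (hdiff x).hasDerivAt.sub ((hasDerivAt_id x).const_mul cst)
        rw [hd.deriv, hode x hx0]
        have h1 : Real.exp (-M) ≤ Real.exp (-lam x) := by
          apply Real.exp_le_exp.2
          have := hbound x hx0
          linarith
        have h2 : (1:ℝ) ≤ 1 + lam x := by linarith [lam_nonneg_s13 lam hdiff h0 hode x hx0]
        nlinarith [Real.exp_pos (-lam x)]
    have := hm (mem_Ici.2 le_rfl) (mem_Ici.2 ht) ht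
    simp only [h0] at this
    linarith
  have hc : 0 < cst := Real.exp_pos _
  obtain ⟨t, ht⟩ : ∃ t : ℝ, 0 ≤ t ∧ M ≤ cst * t := ⟨M / cst, by positivity, by
    rw [mul_div_cancel₀]; exact hc.ne'⟩
  exact absurd (hbound t ht.1) (not_lt.2 (le_trans ht.2 (hgrow t ht.1)))

end LamFacts

lemma herr_formula (lam : ℝ → ℝ) (Δ : ℕ) (r : ℕ → ℝ) (t : ℝ) (ht : 0 < t) (hy0 : 0 < lam t)
    (hdiffr : Differentiable ℝ lam)
    (hode : ∀ s : ℝ, 0 ≤ s → deriv lam s = Real.exp (-lam s) * (1 + lam s)) :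
    Herr lam Δ r t = Real.exp (-lam t) * Real.exp (-lam t) *
      (Fp Δ r (lam t) + (1 + lam t) * Gp Δ r (lam t)
        - Real.exp (-lam t) * (1 + lam t) * (1 + 2 * lam t) * Phi Δ r (lam t)) := by
  set y := lam t with hy
  set g : ℝ → ℝ := fun x => Real.exp x / (1 + x) ^ 2 * Fp Δ r x with hg
  set D : ℝ := Real.exp (-y) * (1 + y) with hD
  have hgc : ContinuousOn g (Ioi (-1 : ℝ)) := g_continuousOn Δ r
  have hDlam : HasDerivAt lam D t := by
    have h := (hdiffr t).hasDerivAt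
    rwa [hode t ht.le] at h
  have hyIoi : y ∈ Ioi (-1 : ℝ) := by simp; linarith
  have hsub : uIcc (0:ℝ) y ⊆ Ioi (-1 : ℝ) := by
    rw [uIcc_of_le hy0.le]
    intro x hx
    simp only [mem_Icc] at hx
    simp only [mem_Ioi]; linarith [hx.1]
  have hint : IntervalIntegrable g MeasureTheory.volume 0 y :=
    (hgc.mono hsub).intervalIntegrable
  have hPhi : HasDerivAt (Phi Δ r) (g y) y := by
    exact intervalIntegral.integral_hasDerivAt_right hint
      (hgc.stronglyMeasurableAtFilter isOpen_Ioi y hyIoi)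
      (hgc.continuousAt (isOpen_Ioi.mem_nhds hyIoi))
  have hcomp : HasDerivAt (fun s => Phi Δ r (lam s)) (g y * D) t := hPhi.comp t hDlam
  have h1 : HasDerivAt (fun s => Real.exp (-lam s)) (Real.exp (-y) * -D) t := hDlam.neg.exp
  have h2 : HasDerivAt (fun s => 1 + lam s) D t := hDlam.const_add 1
  have h3 : HasDerivAt (fun s => Real.exp (-lam s) * (1 + lam s) * Phi Δ r (lam s))
      ((Real.exp (-y) * -D * (1 + y) + Real.exp (-y) * D) * Phi Δ r y
        + Real.exp (-y) * (1 + y) * (g y * D)) t := (h1.mul h2).mul hcomp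
  have heq : LamErr lam Δ r =ᶠ[𝓝 t] fun s => Real.exp (-lam s) * (1 + lam s) * Phi Δ r (lam s) := by
    filter_upwards [Ioi_mem_nhds ht] with s hs
    simp only [LamErr, Phi, Fp]
    rw [hode s (le_of_lt hs)]
  have hderivLam : deriv (LamErr lam Δ r) t =
      (Real.exp (-y) * -D * (1 + y) + Real.exp (-y) * D) * Phi Δ r y
        + Real.exp (-y) * (1 + y) * (g y * D) := by
    rw [heq.deriv_eq]
    exact h3.deriv
  have hLamErr : LamErr lam Δ r t = D * Phi Δ r y := by
    simp only [LamErr, Phi, Fp]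
    rw [hode t ht.le]
  unfold Herr
  rw [hderivLam, hLamErr, hode t ht.le]
  have hGp : (∑ k ∈ Finset.range (Δ - 1), lam t ^ k / (Nat.factorial k : ℝ) * r (k + 2))
      = Gp Δ r y := rfl
  rw [hGp, hg, hD]
  have h1y : (1 + y) ≠ 0 := by linarith
  rw [Real.exp_neg]
  field_simp
  ring

lemma swap_lemma (Δ : ℕ) (r : ℕ → ℝ) (f : ℕ → ℝ) :
    ∑ k ∈ Finset.Icc 2 (Δ - 1), f k * tailS Δ r (k + 1)
      = ∑ d ∈ Finset.Icc 3 Δ, r d * ∑ k ∈ Finset.Icc 2 (d - 1), f k := by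
  unfold tailS
  simp only [Finset.mul_sum]
  rw [Finset.sum_comm' (s' := fun d : ℕ => Finset.Icc 2 (d - 1)) (t' := Finset.Icc 3 Δ)]
  · apply Finset.sum_congr rfl
    intro d _
    apply Finset.sum_congr rfl
    intro k _
    ring
  · intro k d
    simp only [Finset.mem_Icc]
    omega

lemma Gp_eq (Δ : ℕ) (hΔ : 3 ≤ Δ) (r : ℕ → ℝ) (hr : memR Δ r) (y : ℝ) :
    Gp Δ r y = -1 + ∑ d ∈ Finset.Icc 3 Δ, r d * (y ^ (d - 2) / (Nat.factorial (d - 2) : ℝ)) := by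
  have h1 : ∑ d ∈ Finset.Icc 2 Δ, (y ^ (d - 2) / (Nat.factorial (d - 2) : ℝ) * r d) = Gp Δ r y := by
    rw [show Finset.Icc 2 Δ = Finset.Ico 2 (Δ+1) from by ext x; simp only [Finset.mem_Icc, Finset.mem_Ico]; omega]
    rw [Finset.sum_Ico_eq_sum_range, show Δ + 1 - 2 = Δ - 1 from by omega]
    unfold Gp
    apply Finset.sum_congr rfl
    intro k _
    rw [show 2 + k - 2 = k from by omega, show 2 + k = k + 2 from by omega]
  have h2 : Finset.Icc 2 Δ = insert 2 (Finset.Icc 3 Δ) := by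
    ext x
    simp only [Finset.mem_Icc, Finset.mem_insert]
    omega
  have h3 : (2:ℕ) ∉ Finset.Icc 3 Δ := by simp
  rw [← h1, h2, Finset.sum_insert h3]
  simp only [show (2:ℕ) - 2 = 0 from rfl, pow_zero, Nat.factorial_zero, Nat.cast_one, div_one,
    one_mul, hr.1]
  congr 1
  apply Finset.sum_congr rfl
  intro d _
  ring

lemma core_ineq (n : ℕ) (y w a K : ℝ) (hw : 1 ≤ w) (hy : 5 ≤ y) (ha : 2 ≤ a)
    (hKa : K = ((n:ℝ)+3)*a) (hyK : (3*(n:ℝ)+17)*K ≤ y) :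
    0 < (1+y)*(w*y^2/a - 1) - (y^2+3*y+1)*(w*y/K + ((n:ℝ)+1)*w/2) := by
  have hn : (0:ℝ) ≤ n := Nat.cast_nonneg n
  have hK6 : 6 ≤ K := by nlinarith
  have hKpos : 0 < K := by linarith
  have hapos : 0 < a := by linarith
  have hy1 : (1:ℝ) ≤ y := by linarith
  have hy0 : (0:ℝ) ≤ y := by linarith
  have hw0 : (0:ℝ) ≤ w := by linarith
  have hwy2 : (0:ℝ) ≤ w*y^2 := by positivity
  have hwy3 : (0:ℝ) < w*y^3 := by nlinarith
  have hq : y^2 + 3*y + 1 ≤ 2*y^2 := by nlinarith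
  have hq0 : 0 ≤ y^2 + 3*y + 1 := by nlinarith
  have A1 : 3*(w*y^3) ≤ ((n:ℝ)+3)*(1+y)*(w*y^2) := by nlinarith [mul_nonneg hn hwy2]
  have A2 : K*(1+y) ≤ (2/17)*(w*y^3) := by
    have h17 : 17*K ≤ y := by nlinarith
    have hyy : y^2 ≤ w*y^3 := by nlinarith
    nlinarith
  have A3 : (y^2+3*y+1)*(w*y) ≤ 2*(w*y^3) := by
    have hwy : (0:ℝ) ≤ w*y := by positivity
    nlinarith [mul_le_mul_of_nonneg_right hq hwy]
  have A4 : K*(y^2+3*y+1)*(((n:ℝ)+1)*w/2) ≤ (1/3)*(w*y^3) := by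
    have h3 : K*((n:ℝ)+1) ≤ y/3 := by nlinarith
    have h5 : K*(y^2+3*y+1)*(((n:ℝ)+1)*w/2) ≤ K*(2*y^2)*(((n:ℝ)+1)*w/2) := by
      have h6 : (0:ℝ) ≤ ((n:ℝ)+1)*w/2 := by positivity
      nlinarith [mul_nonneg (le_of_lt hKpos) h6]
    have h4 : K*(2*y^2)*(((n:ℝ)+1)*w/2) = (K*((n:ℝ)+1))*(w*y^2) := by ring
    nlinarith [mul_le_mul_of_nonneg_right h3 hwy2]
  have key : 0 < ((n:ℝ)+3)*(1+y)*(w*y^2) - K*(1+y) - (y^2+3*y+1)*(w*y)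
      - K*(y^2+3*y+1)*(((n:ℝ)+1)*w/2) := by
    linarith
  calc (0:ℝ) < (((n:ℝ)+3)*(1+y)*(w*y^2) - K*(1+y) - (y^2+3*y+1)*(w*y)
      - K*(y^2+3*y+1)*(((n:ℝ)+1)*w/2))/K := by positivity
    _ = (1+y)*(w*y^2/a - 1) - (y^2+3*y+1)*(w*y/K + ((n:ℝ)+1)*w/2) := by
        rw [hKa]; field_simp; ring

lemma A_pos (Δ : ℕ) (hΔ : 3 ≤ Δ) (d : ℕ) (hd3 : 3 ≤ d) (hdΔ : d ≤ Δ) (y : ℝ)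
    (hy : ((3*Δ+5) * Δ.factorial + 5 : ℝ) ≤ y) (hy5 : 5 ≤ y) :
    0 < (∑ k ∈ Finset.Icc 2 (d-1), y^k/(Nat.factorial k : ℝ))
      + (1+y) * (y^(d-2)/(Nat.factorial (d-2) : ℝ) - 1)
      - (1+y)*(1+2*y) * ∑ k ∈ Finset.Icc 2 (d-1), y^(k-2)/(Nat.factorial k : ℝ) := by
  have hy1 : (1:ℝ) ≤ y := by linarith
  have hy0 : (0:ℝ) ≤ y := by linarith
  set S2 := ∑ k ∈ Finset.Icc 2 (d-1), y^(k-2)/(Nat.factorial k : ℝ) with hS2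
  have hS1 : (∑ k ∈ Finset.Icc 2 (d-1), y^k/(Nat.factorial k : ℝ)) = y^2 * S2 := by
    rw [hS2, Finset.mul_sum]
    apply Finset.sum_congr rfl
    intro k hk
    rw [Finset.mem_Icc] at hk
    rw [show k = 2 + (k - 2) from by omega, pow_add]
    rw [show 2 + (k-2) - 2 = k - 2 from by omega]
    ring
  rw [hS1]
  have hmain : 0 < (1+y) * (y^(d-2)/(Nat.factorial (d-2) : ℝ) - 1) - (y^2+3*y+1) * S2 := by
    rcases Nat.lt_or_ge d 4 with hd4 | hd4
    · have hd : d = 3 := by omega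
      subst hd
      have : S2 = 1/2 := by
        rw [hS2]
        norm_num [Finset.Icc_self]
      rw [this]
      norm_num [Nat.factorial_one]
      nlinarith
    · obtain ⟨n, rfl⟩ : ∃ n, d = n + 4 := ⟨d - 4, by omega⟩
      set w := y^n with hwdef
      set a := ((n+2).factorial : ℝ) with hadef
      set K := ((n+3).factorial : ℝ) with hKdef
      have hw : 1 ≤ w := one_le_pow₀ hy1
      have ha : 2 ≤ a := by
        rw [hadef]
        exact_mod_cast Nat.le_trans (by omega) (Nat.self_le_factorial (n+2))
      have hKa : K = ((n:ℝ)+3)*a := by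
        rw [hKdef, hadef, show n + 3 = (n+2) + 1 from rfl, Nat.factorial_succ]
        push_cast
        ring
      have hyK : (3*(n:ℝ)+17)*K ≤ y := by
        have h1 : ((n:ℕ)+3).factorial ≤ Δ.factorial := Nat.factorial_le (by omega)
        have h2 : 3*(n:ℝ)+17 ≤ 3*(Δ:ℝ)+5 := by
          have : (n:ℝ) + 4 ≤ Δ := by exact_mod_cast (by omega : n + 4 ≤ Δ)
          linarith
        have h3 : (0:ℝ) ≤ K := by positivity
        have h4 : K ≤ (Δ.factorial : ℝ) := by rw [hKdef]; exact_mod_cast h1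
        have h5 : (3*(n:ℝ)+17)*K ≤ (3*(Δ:ℝ)+5) * (Δ.factorial : ℝ) := by
          apply mul_le_mul h2 h4 h3
          positivity
        calc (3*(n:ℝ)+17)*K ≤ (3*(Δ:ℝ)+5) * (Δ.factorial : ℝ) := h5
          _ ≤ y - 5 := by
              have := hy
              push_cast at this ⊢
              linarith
          _ ≤ y := by linarith
      have hsplit : S2 = (∑ k ∈ Finset.Icc 2 (n+2), y^(k-2)/(Nat.factorial k : ℝ))
          + y^(n+1)/(Nat.factorial (n+3) : ℝ) := by
        rw [hS2, show n + 4 - 1 = (n+2) + 1 from by omega, Finset.sum_Icc_succ_top (by omega)]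
        rw [show (n+2) + 1 - 2 = n + 1 from by omega, show (n+2)+1 = n+3 from by omega]
      have hbound : (∑ k ∈ Finset.Icc 2 (n+2), y^(k-2)/(Nat.factorial k : ℝ))
          ≤ ((n:ℝ)+1) * (y^n/2) := by
        have hcard : (Finset.Icc 2 (n+2)).card = n + 1 := by
          rw [Nat.card_Icc]; omega
        calc (∑ k ∈ Finset.Icc 2 (n+2), y^(k-2)/(Nat.factorial k : ℝ))
            ≤ (Finset.Icc 2 (n+2)).card • (y^n/2) := by
              apply Finset.sum_le_card_nsmul
              intro k hk
              rw [Finset.mem_Icc] at hk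
              apply div_le_div₀ (by positivity) (pow_le_pow_right₀ hy1 (by omega)) (by norm_num)
              exact_mod_cast Nat.le_trans hk.1 (Nat.self_le_factorial k)
          _ = ((n:ℝ)+1) * (y^n/2) := by
              rw [hcard, nsmul_eq_mul]
              push_cast
              ring
      have hq0 : (0:ℝ) ≤ y^2+3*y+1 := by nlinarith
      have hS2le : S2 ≤ w*y/K + ((n:ℝ)+1)*w/2 := by
        rw [hsplit]
        have e1 : y^(n+1)/(Nat.factorial (n+3) : ℝ) = w*y/K := by
          rw [hwdef, hKdef, pow_succ]
        rw [e1]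
        have e2 : ((n:ℝ)+1) * (y^n/2) = ((n:ℝ)+1)*w/2 := by rw [hwdef]; ring
        linarith [e2 ▸ hbound]
      have hPd : y^(n+4-2)/(Nat.factorial (n+4-2) : ℝ) = w*y^2/a := by
        rw [show n+4-2 = n+2 from by omega, hadef, hwdef, pow_add]
      rw [hPd]
      have hcore := core_ineq n y w a K hw hy5 ha hKa hyK
      have hmul : (y^2+3*y+1) * S2 ≤ (y^2+3*y+1) * (w*y/K + ((n:ℝ)+1)*w/2) :=
        mul_le_mul_of_nonneg_left hS2le hq0
      linarith
  nlinarith [hmain]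

lemma tailS_nonneg (Δ : ℕ) (r : ℕ → ℝ) (hr : memR Δ r) (k : ℕ) (hk : 3 ≤ k) :
    0 ≤ tailS Δ r k := by
  apply Finset.sum_nonneg
  intro d hd
  rw [Finset.mem_Icc] at hd
  exact hr.2.1 d (le_trans hk hd.1) hd.2

lemma Phi_le (Δ : ℕ) (r : ℕ → ℝ) (hr : memR Δ r) (y : ℝ) (hy0 : 0 < y) :
    Phi Δ r y ≤ Real.exp y *
      ∑ k ∈ Finset.Icc 2 (Δ - 1), y ^ (k-2) / (Nat.factorial k : ℝ) * tailS Δ r (k + 1) := by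
  set T := ∑ k ∈ Finset.Icc 2 (Δ - 1), y ^ (k-2) / (Nat.factorial k : ℝ) * tailS Δ r (k + 1)
    with hT
  have hTnn : 0 ≤ T := by
    apply Finset.sum_nonneg
    intro k hk
    rw [Finset.mem_Icc] at hk
    have := tailS_nonneg Δ r hr (k+1) (by omega)
    positivity
  have hsub : uIcc (0:ℝ) y ⊆ Ioi (-1 : ℝ) := by
    rw [uIcc_of_le hy0.le]
    intro x hx
    rw [mem_Icc] at hx
    rw [mem_Ioi]; linarith [hx.1]
  have hptwise : ∀ x ∈ Icc (0:ℝ) y,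
      Real.exp x / (1 + x) ^ 2 * Fp Δ r x ≤ Real.exp x * T := by
    intro x hx
    rw [mem_Icc] at hx
    have h1x : (0:ℝ) < 1 + x := by linarith [hx.1]
    have hFpT : Fp Δ r x ≤ T * (1 + x)^2 := by
      rw [hT, Finset.sum_mul]
      apply Finset.sum_le_sum
      intro k hk
      rw [Finset.mem_Icc] at hk
      have hs := tailS_nonneg Δ r hr (k+1) (by omega)
      have hxk : x^k ≤ y^(k-2) * (1+x)^2 := by
        have e1 : x^k = x^(k-2) * x^2 := by
          rw [← pow_add]; congr 1; omega
        rw [e1]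
        apply mul_le_mul (pow_le_pow_left₀ hx.1 hx.2 _)
          (by nlinarith [hx.1] : x^2 ≤ (1+x)^2) (by positivity) (by positivity)
      calc x ^ k / (Nat.factorial k : ℝ) * tailS Δ r (k + 1)
          ≤ (y^(k-2) * (1+x)^2) / (Nat.factorial k : ℝ) * tailS Δ r (k + 1) := by
            have hkf : (0:ℝ) < (Nat.factorial k : ℝ) := by positivity
            exact mul_le_mul_of_nonneg_right (by gcongr) hs
          _ = y ^ (k-2) / (Nat.factorial k : ℝ) * tailS Δ r (k + 1) * (1+x)^2 := by ring
    calc Real.exp x / (1 + x) ^ 2 * Fp Δ r x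
        ≤ Real.exp x / (1 + x) ^ 2 * (T * (1+x)^2) := by
          apply mul_le_mul_of_nonneg_left hFpT (by positivity)
      _ = Real.exp x * T := by
          field_simp
  have hint1 : IntervalIntegrable (fun x => Real.exp x / (1 + x) ^ 2 * Fp Δ r x)
      MeasureTheory.volume 0 y :=
    ((g_continuousOn Δ r).mono hsub).intervalIntegrable
  have hint2 : IntervalIntegrable (fun x => Real.exp x * T) MeasureTheory.volume 0 y :=
    (continuous_exp.mul continuous_const).intervalIntegrable 0 y
  have hmono := intervalIntegral.integral_mono_on hy0.le hint1 hint2 hptwise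
  have heval : (∫ x in (0:ℝ)..y, Real.exp x * T) = (Real.exp y - 1) * T := by
    rw [intervalIntegral.integral_mul_const, integral_exp, Real.exp_zero]
  unfold Phi
  calc (∫ x in (0:ℝ)..y, Real.exp x / (1 + x) ^ 2 * Fp Δ r x)
      ≤ (∫ x in (0:ℝ)..y, Real.exp x * T) := hmono
    _ = (Real.exp y - 1) * T := heval
    _ ≤ Real.exp y * T := by nlinarith [hTnn]

lemma bracket_pos (Δ : ℕ) (hΔ : 3 ≤ Δ) (r : ℕ → ℝ) (hr : memR Δ r) (y : ℝ)
    (hy : ((3*Δ+5) * Δ.factorial + 5 : ℝ) ≤ y) :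
    0 < Fp Δ r y + (1+y) * Gp Δ r y
      - Real.exp (-y) * (1+y) * (1+2*y) * Phi Δ r y := by
  have hfact : (0:ℝ) ≤ (3*(Δ:ℝ)+5) * (Δ.factorial : ℝ) := by positivity
  have hy5 : (5:ℝ) ≤ y := by linarith
  have hy0 : (0:ℝ) < y := by linarith
  set T := ∑ k ∈ Finset.Icc 2 (Δ - 1), y ^ (k-2) / (Nat.factorial k : ℝ) * tailS Δ r (k + 1)
    with hT
  have hPhiLe := Phi_le Δ r hr y hy0
  have hcoef : (0:ℝ) ≤ Real.exp (-y) * (1+y) * (1+2*y) := by positivity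
  have step2 : Real.exp (-y) * (1+y) * (1+2*y) * Phi Δ r y ≤ (1+y)*(1+2*y)*T := by
    have h := mul_le_mul_of_nonneg_left hPhiLe hcoef
    have hee : Real.exp (-y) * Real.exp y = 1 := by rw [← Real.exp_add]; simp
    calc Real.exp (-y) * (1+y) * (1+2*y) * Phi Δ r y
        ≤ Real.exp (-y) * (1+y) * (1+2*y) * (Real.exp y * T) := h
      _ = (Real.exp (-y) * Real.exp y) * ((1+y)*(1+2*y)*T) := by ring
      _ = (1+y)*(1+2*y)*T := by rw [hee]; ring
  have hmain : 0 < Fp Δ r y + (1+y) * Gp Δ r y - (1+y)*(1+2*y)*T := by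
    have hFp : Fp Δ r y
        = ∑ d ∈ Finset.Icc 3 Δ, r d * ∑ k ∈ Finset.Icc 2 (d-1), y^k/(Nat.factorial k : ℝ) :=
      swap_lemma Δ r _
    have hTs : T
        = ∑ d ∈ Finset.Icc 3 Δ, r d * ∑ k ∈ Finset.Icc 2 (d-1), y^(k-2)/(Nat.factorial k : ℝ) :=
      swap_lemma Δ r _
    have hGp := Gp_eq Δ hΔ r hr y
    rw [hFp, hGp, hTs]
    have hone : (-1 : ℝ) = -∑ k ∈ Finset.Icc 3 Δ, r k := by rw [hr.2.2.2]
    rw [hone]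
    have hcomb : (∑ d ∈ Finset.Icc 3 Δ, r d * ∑ k ∈ Finset.Icc 2 (d-1), y^k/(Nat.factorial k : ℝ))
        + (1+y) * (-(∑ k ∈ Finset.Icc 3 Δ, r k)
            + ∑ d ∈ Finset.Icc 3 Δ, r d * (y ^ (d - 2) / (Nat.factorial (d - 2) : ℝ)))
        - (1+y)*(1+2*y) * (∑ d ∈ Finset.Icc 3 Δ, r d * ∑ k ∈ Finset.Icc 2 (d-1), y^(k-2)/(Nat.factorial k : ℝ))
        = ∑ d ∈ Finset.Icc 3 Δ, r d * ((∑ k ∈ Finset.Icc 2 (d-1), y^k/(Nat.factorial k : ℝ))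
            + (1+y) * (y^(d-2)/(Nat.factorial (d-2) : ℝ) - 1)
            - (1+y)*(1+2*y) * ∑ k ∈ Finset.Icc 2 (d-1), y^(k-2)/(Nat.factorial k : ℝ)) := by
      rw [mul_add, mul_neg, Finset.mul_sum, Finset.mul_sum, Finset.mul_sum]
      rw [← Finset.sum_neg_distrib, ← Finset.sum_add_distrib, ← Finset.sum_add_distrib,
        ← Finset.sum_sub_distrib]
      apply Finset.sum_congr rfl
      intro d _
      ring
    rw [hcomb]
    apply Finset.sum_pos'
    · intro d hd
      rw [Finset.mem_Icc] at hd
      exact mul_nonneg (hr.2.1 d hd.1 hd.2) (A_pos Δ hΔ d hd.1 hd.2 y hy hy5).le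
    · obtain ⟨d, hd, hrd⟩ : ∃ d ∈ Finset.Icc 3 Δ, 0 < r d := by
        by_contra hcon
        push_neg at hcon
        have h1 := Finset.sum_nonpos hcon
        rw [hr.2.2.2] at h1
        linarith
      have hd' := hd
      rw [Finset.mem_Icc] at hd'
      exact ⟨d, hd, mul_pos hrd (A_pos Δ hΔ d hd'.1 hd'.2 y hy hy5)⟩
  linarith

end HerrAux

-- ===================== end auxiliary development =====================

/-- Eventual positivity of `H_r`: there is `θ > 0` with `H_r(t) > 0` for all
`r ∈ R_Δ` and `t ≥ θ`. -/
theorem Herr_eventually_positive (Δ : ℕ) (hΔ : 3 ≤ Δ) (lam : ℝ → ℝ)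
    (hdiff : Differentiable ℝ lam) (h0 : lam 0 = 0)
    (hode : ∀ t : ℝ, 0 ≤ t → deriv lam t = Real.exp (-lam t) * (1 + lam t)) :
    ∃ θ : ℝ, 0 < θ ∧ ∀ r : ℕ → ℝ, memR Δ r → ∀ t : ℝ, θ ≤ t → 0 < Herr lam Δ r t := by
  obtain ⟨θ0, hθ0pos, hθ0⟩ := lam_unbounded lam hdiff h0 hode (((3*Δ+5) * Δ.factorial + 5 : ℝ))
  refine ⟨max θ0 1, lt_of_lt_of_le zero_lt_one (le_max_right _ _), ?_⟩
  intro r hr t ht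
  have ht1 : (1:ℝ) ≤ t := le_trans (le_max_right θ0 1) ht
  have htpos : (0:ℝ) < t := by linarith
  have hyL : ((3*Δ+5) * Δ.factorial + 5 : ℝ) ≤ lam t := hθ0 t (le_trans (le_max_left _ _) ht)
  have hy0 : 0 < lam t := lam_pos_s13 lam hdiff h0 hode t htpos
  rw [herr_formula lam Δ r t htpos hy0 hdiff hode]
  exact mul_pos (by positivity) (bracket_pos Δ hΔ r hr (lam t) hyL)
end
end
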